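/- Let a ∈ ℂ with a ≠ 0 and x₁, x₂, x₃ ∈ ℂ. Then (a, x₁, x₂, x₃) ∈ ℍ_N if and only if (x₁, x₂, x₃, a + (x₁x₂ − x₃)/a) ∈ 𝔽. -/
import Mathlib


/-- The operator norm of a 2×2 complex matrix, acting on the Euclidean space ℂ². -/
noncomputable def opNorm (A : Matrix (Fin 2) (Fin 2) ℂ) : ℝ :=
  ‖LinearMap.toContinuousLinearMap (Matrix.toEuclideanLin A)‖

/-- The domain 𝔽 = {(a₁₁, a₂₂, det A, a₁₂ + a₂₁) : A ∈ M₂(ℂ), ‖A‖ < 1}. -/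
noncomputable def domF : Set (ℂ × ℂ × ℂ × ℂ) :=
  {w | ∃ A : Matrix (Fin 2) (Fin 2) ℂ, opNorm A < 1 ∧
    w = (A 0 0, A 1 1, A.det, A 0 1 + A 1 0)}

/-- The normed hexablock ℍ_N = {(a₂₁, a₁₁, a₂₂, det A) : A ∈ M₂(ℂ), ‖A‖ < 1}. -/
noncomputable def HN : Set (ℂ × ℂ × ℂ × ℂ) :=
  {w | ∃ A : Matrix (Fin 2) (Fin 2) ℂ, opNorm A < 1 ∧
    w = (A 1 0, A 0 0, A 1 1, A.det)}

open scoped Matrix.Norms.L2Operator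
open Matrix

lemma opNorm_eq (A : Matrix (Fin 2) (Fin 2) ℂ) : opNorm A = ‖A‖ := rfl

noncomputable def conjVec (x : EuclideanSpace ℂ (Fin 2)) : EuclideanSpace ℂ (Fin 2) :=
  (WithLp.equiv 2 _).symm fun i => starRingEnd ℂ (x i)

lemma norm_conjVec (x : EuclideanSpace ℂ (Fin 2)) : ‖conjVec x‖ = ‖x‖ := by
  rw [EuclideanSpace.norm_eq, EuclideanSpace.norm_eq]
  congr 1
  refine Finset.sum_congr rfl fun i _ => ?_
  simp [conjVec]

lemma mulVec_map_conj (A : Matrix (Fin 2) (Fin 2) ℂ) (x : EuclideanSpace ℂ (Fin 2)) :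
    (A.map (starRingEnd ℂ)) *ᵥ (WithLp.equiv 2 _ x) =
      fun i => starRingEnd ℂ ((A *ᵥ (WithLp.equiv 2 _ (conjVec x))) i) := by
  funext i
  simp [Matrix.mulVec, dotProduct, conjVec, map_sum, Finset.mul_sum]

lemma norm_map_conj_le (A : Matrix (Fin 2) (Fin 2) ℂ) :
    ‖A.map (starRingEnd ℂ)‖ ≤ ‖A‖ := by
  rw [Matrix.l2_opNorm_def]
  refine ContinuousLinearMap.opNorm_le_bound _ (norm_nonneg A) fun x => ?_
  have h1 : (Matrix.toEuclideanLin (A.map (starRingEnd ℂ))).toContinuousLinearMap x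
      = conjVec ((EuclideanSpace.equiv (Fin 2) ℂ).symm (A *ᵥ (WithLp.equiv 2 _ (conjVec x)))) := by
    apply (WithLp.equiv 2 _).injective
    exact mulVec_map_conj A x
  calc ‖(Matrix.toEuclideanLin (A.map (starRingEnd ℂ))).toContinuousLinearMap x‖
      = ‖(EuclideanSpace.equiv (Fin 2) ℂ).symm (A *ᵥ (WithLp.equiv 2 _ (conjVec x)))‖ := by
        rw [h1, norm_conjVec]
    _ ≤ ‖A‖ * ‖conjVec x‖ := Matrix.l2_opNorm_mulVec A (conjVec x)
    _ = ‖A‖ * ‖x‖ := by rw [norm_conjVec]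

lemma myNormTranspose (A : Matrix (Fin 2) (Fin 2) ℂ) : ‖Aᵀ‖ = ‖A‖ := by
  have key : ∀ B : Matrix (Fin 2) (Fin 2) ℂ, ‖Bᵀ‖ ≤ ‖B‖ := by
    intro B
    have h : Bᵀ = (Bᴴ).map (starRingEnd ℂ) := by
      ext i j; simp [Matrix.conjTranspose_apply]
    rw [h]
    calc ‖(Bᴴ).map (starRingEnd ℂ)‖ ≤ ‖Bᴴ‖ := norm_map_conj_le _
      _ = ‖B‖ := Matrix.l2_opNorm_conjTranspose B
  refine le_antisymm (key A) ?_
  simpa using key Aᵀ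

/-- Proposition 2.12(2): for a ≠ 0, (a, x₁, x₂, x₃) ∈ ℍ_N iff
(x₁, x₂, x₃, a + (x₁x₂ − x₃)/a) ∈ 𝔽. -/
theorem stmt12 (a x1 x2 x3 : ℂ) (ha : a ≠ 0) :
    (a, x1, x2, x3) ∈ HN ↔ (x1, x2, x3, a + (x1 * x2 - x3) / a) ∈ domF := by
  constructor
  · rintro ⟨A, hA, hw⟩
    simp only [Prod.mk.injEq] at hw
    obtain ⟨h10, h00, h11, hdet⟩ := hw
    refine ⟨A, hA, ?_⟩
    have hd : A.det = A 0 0 * A 1 1 - A 0 1 * A 1 0 := Matrix.det_fin_two A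
    have : x1 * x2 - x3 = A 0 1 * a := by
      rw [h00, h11, hdet, hd, h10]; ring
    simp only [Prod.mk.injEq]
    refine ⟨h00, h11, hdet, ?_⟩
    rw [this, mul_div_assoc, div_self ha, mul_one, h10]; ring
  · rintro ⟨B, hB, hw⟩
    simp only [Prod.mk.injEq] at hw
    obtain ⟨h00, h11, hdet, hsum⟩ := hw
    have hd : B.det = B 0 0 * B 1 1 - B 0 1 * B 1 0 := Matrix.det_fin_two B
    have hc : x1 * x2 - x3 = B 0 1 * B 1 0 := by rw [h00, h11, hdet, hd]; ring
    have hroots : (B 1 0 - a) * (B 0 1 - a) = 0 := by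
      have : B 0 1 + B 1 0 = a + (B 0 1 * B 1 0) / a := by rw [← hsum, ← hc]
      have h2 : a * (B 0 1 + B 1 0) = a * a + B 0 1 * B 1 0 := by
        rw [this]; field_simp
      have : a * (B 1 0 - a) * (B 0 1 - a) = 0 := by linear_combination -a * h2
      rcases mul_eq_zero.mp this with h | h
      · rcases mul_eq_zero.mp h with h' | h'
        · exact absurd h' ha
        · rw [h']; ring
      · rw [h]; ring
    rcases mul_eq_zero.mp hroots with h | h
    · -- B 1 0 = a : use B
      have h10 : B 1 0 = a := sub_eq_zero.mp h
      exact ⟨B, hB, by simp [Prod.mk.injEq, h10, h00, h11, hdet]⟩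
    · -- B 0 1 = a : use Bᵀ
      have h01 : B 0 1 = a := sub_eq_zero.mp h
      refine ⟨Bᵀ, ?_, ?_⟩
      · rw [opNorm_eq, myNormTranspose, ← opNorm_eq]; exact hB
      · simp [Matrix.transpose_apply, Matrix.det_transpose, h01, h00, h11, hdet]
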